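/- Assume the series S = Σ_{i=1}^{∞} (−1)ⁱ·(Σ_{j=1}^{i} 1/j²)/i converges, and define f_n = (−1)ⁿ·( Σ_{i=1}^{n} (−1)ⁱ·(Σ_{j=1}^{i} 1/j²)/i − S ) for n ∈ ℕ. Then for all n ∈ ℕ, (n+1)(n+2)²·f_n − (n+2)(n² + 7n + 11)·f_{n+1} + (−n³ − 5n² − 6n + 1)·f_{n+2} + (n+3)³·f_{n+3} = 0. -/

import Mathlib

open MeasureTheory Real Filter

/-- The sequence `f_n = (−1)ⁿ·(Σ_{i=1}^n (−1)ⁱ H_i⁽²⁾/i − S)`, where `S` is the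
alternating Euler sum `Σ_{i=1}^∞ (−1)ⁱ H_i⁽²⁾/i`, satisfies a holonomic
recurrence of order three. -/
theorem recurrence_alternating_euler_sum (S : ℝ)
    (hS : Filter.Tendsto
      (fun N : ℕ => ∑ i ∈ Finset.Icc 1 N,
        (-1 : ℝ) ^ i * (∑ j ∈ Finset.Icc 1 i, 1 / (j : ℝ) ^ 2) / i)
      Filter.atTop (nhds S))
    (f : ℕ → ℝ)
    (hf : ∀ n : ℕ, f n = (-1 : ℝ) ^ n *
      ((∑ i ∈ Finset.Icc 1 n,
        (-1 : ℝ) ^ i * (∑ j ∈ Finset.Icc 1 i, 1 / (j : ℝ) ^ 2) / i) - S)) :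
    ∀ n : ℕ,
      ((n : ℝ) + 1) * ((n : ℝ) + 2) ^ 2 * f n -
        ((n : ℝ) + 2) * ((n : ℝ) ^ 2 + 7 * n + 11) * f (n + 1) +
        (-(n : ℝ) ^ 3 - 5 * (n : ℝ) ^ 2 - 6 * n + 1) * f (n + 2) +
        ((n : ℝ) + 3) ^ 3 * f (n + 3) = 0 := by
  intro n
  set a : ℕ → ℝ := fun m => ∑ j ∈ Finset.Icc 1 m, 1 / (j : ℝ) ^ 2 with ha
  have hstep : ∀ m : ℕ, f (m + 1) = -f m + a (m + 1) / ((m : ℝ) + 1) := by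
    intro m
    have h1 : (∑ i ∈ Finset.Icc 1 (m + 1),
        (-1 : ℝ) ^ i * (∑ j ∈ Finset.Icc 1 i, 1 / (j : ℝ) ^ 2) / i)
        = (∑ i ∈ Finset.Icc 1 m,
            (-1 : ℝ) ^ i * (∑ j ∈ Finset.Icc 1 i, 1 / (j : ℝ) ^ 2) / i)
          + (-1 : ℝ) ^ (m + 1) * a (m + 1) / ((m : ℝ) + 1) := by
      rw [Finset.sum_Icc_succ_top (by omega)]
      push_cast
      rfl
    have hm : ((-1 : ℝ) ^ m) * ((-1 : ℝ) ^ m) = 1 := by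
      rw [← pow_add, ← two_mul, pow_mul]
      norm_num
    rw [hf, hf, h1, pow_succ]
    linear_combination (a (m + 1) / ((m : ℝ) + 1)) * hm
  have h1 := hstep n
  have h2 := hstep (n + 1)
  have h3 := hstep (n + 2)
  have e2 : (n : ℕ) + 1 + 1 = n + 2 := rfl
  have e3 : (n : ℕ) + 2 + 1 = n + 3 := rfl
  rw [e2] at h2
  rw [e3] at h3
  push_cast at h2 h3
  have ha2 : a (n + 2) = a (n + 1) + 1 / ((n : ℝ) + 2) ^ 2 := by
    show (∑ j ∈ Finset.Icc 1 (n + 2), 1 / (j : ℝ) ^ 2) = _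
    rw [Finset.sum_Icc_succ_top (by omega)]
    simp only [ha]
    push_cast
    ring
  have ha3 : a (n + 3) = a (n + 2) + 1 / ((n : ℝ) + 3) ^ 2 := by
    show (∑ j ∈ Finset.Icc 1 (n + 3), 1 / (j : ℝ) ^ 2) = _
    rw [Finset.sum_Icc_succ_top (by omega)]
    simp only [ha]
    push_cast
    ring
  rw [h3, h2, h1, ha3, ha2]
  have hn1 : (n : ℝ) + 1 ≠ 0 := by positivity
  have hn2 : (n : ℝ) + 2 ≠ 0 := by positivity
  have hn3 : (n : ℝ) + 3 ≠ 0 := by positivity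
  field_simp
  ring
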